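/- Let a > 0, D₁ > 0, D₂ > 0, τ > 0 and r₀ > 0 be fixed. Then the mean channel impulse response m(t) = ∫₀^∞ ĥ(r,τ)·f_{r,t}(r) dr tends to 0 as t → ∞. -/

import Mathlib

open MeasureTheory Real Filter

/-- The channel impulse response at distance `r` and elapsed time `τ`. -/
noncomputable def hCIR (a D₁ τ r : ℝ) : ℝ :=
  a / Real.sqrt (4 * π * D₁ * τ ^ 3) * (1 - a / r) * Real.exp (-(r - a) ^ 2 / (4 * D₁ * τ))

/-- The density of the distance between transmitter and receiver at time `t`. -/
noncomputable def fdist (r₀ D₂ t x : ℝ) : ℝ :=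
  if 0 < x then
    x / (r₀ * Real.sqrt (π * D₂ * t)) * Real.exp (-(x ^ 2 + r₀ ^ 2) / (4 * D₂ * t))
      * Real.sinh (r₀ * x / (2 * D₂ * t))
  else 0

/-- The mean channel impulse response tends to zero as time tends to infinity. -/
theorem mean_CIR_tendsto_zero (a D₁ D₂ τ r₀ : ℝ) (ha : 0 < a) (hD₁ : 0 < D₁)
    (hD₂ : 0 < D₂) (hτ : 0 < τ) (hr₀ : 0 < r₀) :
    Tendsto (fun t => ∫ r in Set.Ioi (0:ℝ), hCIR a D₁ τ r * fdist r₀ D₂ t r)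
      atTop (nhds 0) := by
  have hb : 0 < (4 * D₁ * τ)⁻¹ := by positivity
  set C₁ : ℝ := a / Real.sqrt (4 * π * D₁ * τ ^ 3) with hC₁
  have hC₁0 : 0 ≤ C₁ := by positivity
  set K : ℝ := C₁ / (2 * r₀ * Real.sqrt (π * D₂)) with hK
  have hK0 : 0 ≤ K := by positivity
  set G : ℝ → ℝ := fun x => K * ((x + a) * Real.exp (-(x - a) ^ 2 / (4 * D₁ * τ))) with hG
  have hGint : IntegrableOn G (Set.Ioi (0:ℝ)) := by
    apply Integrable.integrableOn
    apply Integrable.const_mul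
    have h1 : Integrable (fun y : ℝ => (y + 2 * a) * Real.exp (-(4 * D₁ * τ)⁻¹ * y ^ 2)) := by
      have h2 := integrable_mul_exp_neg_mul_sq hb
      have h3 := (integrable_exp_neg_mul_sq hb).const_mul (2 * a)
      have := h2.add h3
      simpa [add_mul, mul_comm, mul_assoc, Pi.add_def] using this
    have h4 := h1.comp_sub_right a
    refine h4.congr (Eventually.of_forall fun x => ?_)
    show (x - a + 2 * a) * Real.exp (-(4 * D₁ * τ)⁻¹ * (x - a) ^ 2)
        = (x + a) * Real.exp (-(x - a) ^ 2 / (4 * D₁ * τ))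
    have h5 : x - a + 2 * a = x + a := by ring
    have h6 : -(4 * D₁ * τ)⁻¹ * (x - a) ^ 2 = -(x - a) ^ 2 / (4 * D₁ * τ) := by
      field_simp
    rw [h5, h6]
  set I : ℝ := ∫ x in Set.Ioi (0:ℝ), G x with hI
  have hI0 : 0 ≤ I := by
    apply setIntegral_nonneg measurableSet_Ioi
    intro x hx
    have : (0:ℝ) < x := hx
    positivity
  apply squeeze_zero_norm' (a := fun t => I / Real.sqrt t)
  · filter_upwards [eventually_ge_atTop (1:ℝ)] with t ht
    have ht0 : 0 < t := lt_of_lt_of_le one_pos ht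
    have hst : 0 < Real.sqrt t := Real.sqrt_pos.mpr ht0
    have key : ∀ x ∈ Set.Ioi (0:ℝ),
        ‖hCIR a D₁ τ x * fdist r₀ D₂ t x‖ ≤ G x / Real.sqrt t := by
      intro x hx
      have hx0 : (0:ℝ) < x := hx
      have hfd : 0 ≤ fdist r₀ D₂ t x := by
        rw [fdist, if_pos hx0]
        have hs : 0 ≤ Real.sinh (r₀ * x / (2 * D₂ * t)) :=
          Real.sinh_nonneg_iff.mpr (by positivity)
        positivity
      have hE : (0:ℝ) < Real.exp (-(x - a) ^ 2 / (4 * D₁ * τ)) := Real.exp_pos _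
      have h1 : |hCIR a D₁ τ x| ≤ C₁ * (1 + a / x) * Real.exp (-(x - a) ^ 2 / (4 * D₁ * τ)) := by
        rw [hCIR, abs_mul, abs_mul, abs_of_nonneg hC₁0, abs_of_pos hE]
        refine mul_le_mul_of_nonneg_right (mul_le_mul_of_nonneg_left ?_ hC₁0) hE.le
        calc |1 - a / x| ≤ |1| + |a / x| := abs_sub _ _
          _ = 1 + a / x := by rw [abs_one, abs_of_nonneg (by positivity)]
      have h2 : fdist r₀ D₂ t x ≤ x / (2 * r₀ * Real.sqrt (π * D₂) * Real.sqrt t) := by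
        rw [fdist, if_pos hx0]
        have hsinh : Real.sinh (r₀ * x / (2 * D₂ * t)) ≤
            Real.exp (r₀ * x / (2 * D₂ * t)) / 2 := by
          rw [Real.sinh_eq]
          have : 0 < Real.exp (-(r₀ * x / (2 * D₂ * t))) := Real.exp_pos _
          linarith
        have hEmul : Real.exp (-(x ^ 2 + r₀ ^ 2) / (4 * D₂ * t)) *
            (Real.exp (r₀ * x / (2 * D₂ * t)) / 2) ≤ 1 / 2 := by
          rw [← mul_div_assoc, ← Real.exp_add]
          have harg : -(x ^ 2 + r₀ ^ 2) / (4 * D₂ * t) + r₀ * x / (2 * D₂ * t) =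
              -(x - r₀) ^ 2 / (4 * D₂ * t) := by
            field_simp; ring
          rw [harg]
          have : Real.exp (-(x - r₀) ^ 2 / (4 * D₂ * t)) ≤ 1 := by
            apply Real.exp_le_one_iff.mpr
            apply div_nonpos_of_nonpos_of_nonneg
            · simp [sq_nonneg]
            · positivity
          linarith
        have hxr : 0 ≤ x / (r₀ * Real.sqrt (π * D₂ * t)) := by positivity
        calc x / (r₀ * Real.sqrt (π * D₂ * t)) *
              Real.exp (-(x ^ 2 + r₀ ^ 2) / (4 * D₂ * t)) *
                Real.sinh (r₀ * x / (2 * D₂ * t))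
            ≤ x / (r₀ * Real.sqrt (π * D₂ * t)) *
              (Real.exp (-(x ^ 2 + r₀ ^ 2) / (4 * D₂ * t)) *
                (Real.exp (r₀ * x / (2 * D₂ * t)) / 2)) := by
              rw [mul_assoc]
              exact mul_le_mul_of_nonneg_left
                (mul_le_mul_of_nonneg_left hsinh (Real.exp_pos _).le) hxr
          _ ≤ x / (r₀ * Real.sqrt (π * D₂ * t)) * (1 / 2) :=
              mul_le_mul_of_nonneg_left hEmul hxr
          _ = x / (2 * r₀ * Real.sqrt (π * D₂) * Real.sqrt t) := by
              rw [mul_assoc π D₂ t, Real.sqrt_mul (by positivity)]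
              field_simp
              try ring_nf
              try exact Or.inl trivial
              rw [Real.sqrt_mul hD₂.le π, Real.sqrt_mul hD₂.le t]; ring
      rw [norm_mul, Real.norm_eq_abs, Real.norm_eq_abs, abs_of_nonneg hfd]
      calc |hCIR a D₁ τ x| * fdist r₀ D₂ t x
          ≤ (C₁ * (1 + a / x) * Real.exp (-(x - a) ^ 2 / (4 * D₁ * τ))) *
            (x / (2 * r₀ * Real.sqrt (π * D₂) * Real.sqrt t)) :=
            mul_le_mul h1 h2 hfd (by positivity)
        _ = G x / Real.sqrt t := by
            rw [hG, hK]
            have hx' : x ≠ 0 := ne_of_gt hx0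
            field_simp
    calc ‖∫ r in Set.Ioi (0:ℝ), hCIR a D₁ τ r * fdist r₀ D₂ t r‖
        ≤ ∫ r in Set.Ioi (0:ℝ), ‖hCIR a D₁ τ r * fdist r₀ D₂ t r‖ :=
          norm_integral_le_integral_norm _
      _ ≤ ∫ r in Set.Ioi (0:ℝ), G r / Real.sqrt t := by
          apply integral_mono_of_nonneg
          · exact Eventually.of_forall fun x => norm_nonneg _
          · exact hGint.div_const _
          · rw [EventuallyLE, ae_restrict_iff' measurableSet_Ioi]
            exact Eventually.of_forall key
      _ = I / Real.sqrt t := by rw [integral_div]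
  · have hsq : Tendsto Real.sqrt atTop atTop := by
      apply tendsto_atTop_atTop.2
      intro b
      exact ⟨max b 0 ^ 2, fun x hx => (le_max_left b 0).trans
        (Real.le_sqrt_of_sq_le hx)⟩
    have : Tendsto (fun t : ℝ => I * (Real.sqrt t)⁻¹) atTop (nhds (I * 0)) :=
      (hsq.inv_tendsto_atTop).const_mul I
    simpa [div_eq_mul_inv] using this
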